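/- arXiv:2006.03553 — 9 statements merged into one kernel-verified Lean document; each statement's English description precedes it below -/
import Mathlib

section
/- For any deterministic team optimal policy π† of a cooperative Markov decision process with K agents, defining q^{k,⋆}(s,a^k) = q†(s, a^k, a^{-k}) where a^{-k} are the actions of the other agents under π†, it holds that max_{a^k} q^{k,⋆}(s,a^k) = max_{ā} q†(s,ā) for every agent k and state s. -/
/-- For any deterministic team optimal policy π† of a cooperative MDP with K
agents, with q^{k,⋆}(s,a^k) = q†(s, a^k, a^{-k}) where a^{-k} are the other agents' actions
under π†, we have max_{a^k} q^{k,⋆}(s,a^k) = max_{ā} q†(s,ā) for every agent k and state s. -/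
theorem stmt0
    {S : Type} [Fintype S] [Nonempty S]
    {K : ℕ} {A : Fin K → Type} [∀ k, Fintype (A k)] [∀ k, Nonempty (A k)]
    (qd : S → ((k : Fin K) → A k) → ℝ)
    (π : S → (k : Fin K) → A k)
    (hopt : ∀ s, qd s (π s) = ⨆ a : (k : Fin K) → A k, qd s a)
    (qstar : (k : Fin K) → S → A k → ℝ)
    (hdef : ∀ k s a, qstar k s a = qd s (Function.update (π s) k a)) :
    ∀ (k : Fin K) (s : S),
      (⨆ a : A k, qstar k s a) = ⨆ a : (k : Fin K) → A k, qd s a := by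
  intro k s
  apply le_antisymm
  · apply ciSup_le
    intro a
    rw [hdef]
    exact le_ciSup (Set.Finite.bddAbove (Set.finite_range _)) _
  · rw [← hopt]
    have h : qd s (π s) = qstar k s (π s k) := by
      rw [hdef, Function.update_eq_self]
    rw [h]
    exact le_ciSup (Set.Finite.bddAbove (Set.finite_range _)) _
end

section
/- With q^{k,⋆} defined as the restriction of q† along a deterministic team optimal policy, the factored functions satisfy the fixed-point equation q^{k,⋆}(s,a^k) = r(s, a^k, a^{-k,⋆}(s)) + γ E_{s'} [ max_{a'} q^{k,⋆}(s', a') ], where a^{-k,⋆}(s) denotes the actions of the other agents prescribed by the optimal policy at s. -/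
/-- With q^{k,⋆} the restriction of q† along a deterministic team optimal
policy, the factored functions satisfy the fixed-point equation
q^{k,⋆}(s,a^k) = r(s, a^k, a^{-k,⋆}(s)) + γ E_{s'} [ max_{a'} q^{k,⋆}(s', a') ]. -/
theorem stmt1
    {S : Type} [Fintype S] [Nonempty S]
    {K : ℕ} {A : Fin K → Type} [∀ k, Fintype (A k)] [∀ k, Nonempty (A k)]
    (r : S → ((k : Fin K) → A k) → ℝ)
    (P : S → ((k : Fin K) → A k) → S → ℝ)
    (γ : ℝ) (hγ0 : 0 ≤ γ) (hγ1 : γ < 1)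
    (hPnn : ∀ s aj s', 0 ≤ P s aj s') (hPsum : ∀ s aj, ∑ s', P s aj s' = 1)
    (qd : S → ((k : Fin K) → A k) → ℝ)
    (hBellman : ∀ s aj, qd s aj
      = r s aj + γ * ∑ s', (P s aj s' * (⨆ aj' : (k : Fin K) → A k, qd s' aj')))
    (π : S → (k : Fin K) → A k)
    (hopt : ∀ s, qd s (π s) = ⨆ aj : (k : Fin K) → A k, qd s aj)
    (qstar : (k : Fin K) → S → A k → ℝ)
    (hdef : ∀ k s a, qstar k s a = qd s (Function.update (π s) k a)) :
    ∀ (k : Fin K) (s : S) (a : A k),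
      qstar k s a = r s (Function.update (π s) k a)
        + γ * ∑ s', (P s (Function.update (π s) k a) s' * (⨆ a' : A k, qstar k s' a')) := by
  intro k s a
  have key : ∀ s' : S, (⨆ a' : A k, qstar k s' a') = ⨆ aj : (kk : Fin K) → A kk, qd s' aj := by
    intro s'
    apply le_antisymm
    · apply ciSup_le
      intro a'
      rw [hdef]
      exact le_ciSup (Set.Finite.bddAbove (Set.finite_range _)) _
    · rw [← hopt s']
      have h1 : qd s' (π s') = qstar k s' (π s' k) := by
        rw [hdef, Function.update_eq_self]
      rw [h1]
      exact le_ciSup (Set.Finite.bddAbove (Set.finite_range _)) _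
  rw [hdef, hBellman]
  congr 1
  congr 1
  apply Finset.sum_congr rfl
  intro s' _
  rw [key s']
end

section
/- If each agent k acts greedily with respect to its factored function q^{k,⋆} (i.e., chooses a^k ∈ argmax_{a^k} q^{k,⋆}(s,a^k), with ties broken to jointly maximize q†), then the resulting joint deterministic policy is team optimal: q†(s, argmax_{a^1} q^{1,⋆}(s,·), ..., argmax_{a^K} q^{K,⋆}(s,·)) = max_ā q†(s,ā) for all s. -/
/-- If each agent k acts greedily with respect to its factored function
q^{k,⋆}, with ties broken to jointly maximize q†, then the resulting joint deterministic
policy is team optimal. -/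
theorem stmt2
    {S : Type} [Fintype S] [Nonempty S]
    {K : ℕ} {A : Fin K → Type} [∀ k, Fintype (A k)] [∀ k, Nonempty (A k)]
    (qd : S → ((k : Fin K) → A k) → ℝ)
    (π : S → (k : Fin K) → A k)
    (hopt : ∀ s, qd s (π s) = ⨆ aj : (k : Fin K) → A k, qd s aj)
    (qstar : (k : Fin K) → S → A k → ℝ)
    (hdef : ∀ k s a, qstar k s a = qd s (Function.update (π s) k a))
    (g : S → (k : Fin K) → A k)
    -- g k is a greedy action for q^{k,⋆} at every state
    (hgreedy : ∀ s k, qstar k s (g s k) = ⨆ a : A k, qstar k s a)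
    -- ties are broken so as to jointly maximize q† among individually greedy selections
    (hties : ∀ s (h : (k : Fin K) → A k),
      (∀ k, qstar k s (h k) = ⨆ a : A k, qstar k s a) → qd s h ≤ qd s (g s)) :
    ∀ s, qd s (g s) = ⨆ aj : (k : Fin K) → A k, qd s aj := by
  intro s
  have hbdd : BddAbove (Set.range (qd s)) := Set.Finite.bddAbove (Set.finite_range _)
  have hle : ∀ a, qd s a ≤ qd s (π s) := by
    intro a; rw [hopt s]; exact le_ciSup hbdd a
  have hπg : ∀ k, qstar k s (π s k) = ⨆ a : A k, qstar k s a := by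
    intro k
    have h1 : qstar k s (π s k) = qd s (π s) := by
      rw [hdef, Function.update_eq_self]
    refine le_antisymm (le_ciSup (Set.Finite.bddAbove (Set.finite_range _)) _) ?_
    refine ciSup_le fun a => ?_
    rw [hdef, h1]; exact hle _
  have h2 : qd s (π s) ≤ qd s (g s) := hties s (π s) hπg
  refine le_antisymm ?_ ?_
  · exact le_ciSup hbdd _
  · rw [← hopt s]; exact h2
end

section
/- There exist K functions q^k satisfying the fixed-point equation of the optimistic team Bellman operator B_E (i.e., q^k(s,a^k) = r(s,a^k,a^{-k}) + γ E max_{a'} q^k(s',a') with a^n = argmax_{a^n} q^n(s,a^n) for n ≠ k) that are not equal to any q^{k,⋆} arising from a team optimal policy; in particular, greedy policies with respect to such q^k can form a strictly suboptimal Nash equilibrium. Concretely, for the 2-agent, 2-action one-shot matrix game with rewards r(α,α)=0, r(α,β)=r(β,α)=−1, r(β,β)=1, the functions q^1(α)=q^2(α)=0, q^1(β)=q^2(β)=−1 satisfy the fixed-point equation but the induced greedy joint action (α,α) has value 0 < 1 = max_ā q†(ā). -/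
/-- Sub-optimal Nash fixed points exist. In the 2-agent, 2-action one-shot
matrix game with r(α,α)=0, r(α,β)=r(β,α)=−1, r(β,β)=1 (α = `false`, β = `true`),
the functions q¹(α)=q²(α)=0, q¹(β)=q²(β)=−1 satisfy the B_E fixed-point equation
(q^k(a) = r(a, a^{-k}) with a^{-k} greedy for q^{-k}), yet the induced greedy joint
action (α,α) has value 0 strictly below the team optimum max_ā q†(ā) = 1. -/
theorem stmt3
    (r : Bool → Bool → ℝ) (q1 q2 : Bool → ℝ)
    (hr1 : r false false = 0) (hr2 : r false true = -1)
    (hr3 : r true false = -1) (hr4 : r true true = 1)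
    (hq1α : q1 false = 0) (hq1β : q1 true = -1)
    (hq2α : q2 false = 0) (hq2β : q2 true = -1) :
    -- α = false is the greedy action of each agent
    (∀ a, q2 a ≤ q2 false) ∧ (∀ a, q1 a ≤ q1 false) ∧
    -- B_E fixed-point equations with the other agent playing its greedy action α
    (∀ a, q1 a = r a false) ∧ (∀ a, q2 a = r false a) ∧
    -- the q^k differ from the factored optimal q^{k,⋆}(a) = q†(a, a^{-k,⋆})
    (q1 false ≠ r false true ∨ q1 true ≠ r true true) ∧
    -- the induced greedy joint action (α,α) is strictly suboptimal
    (r false false < ⨆ p : Bool × Bool, r p.1 p.2) ∧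
    (r false false = 0) ∧ ((⨆ p : Bool × Bool, r p.1 p.2) = 1) := by
  have hsup : (⨆ p : Bool × Bool, r p.1 p.2) = 1 := by
    apply le_antisymm
    · apply ciSup_le
      rintro ⟨a, b⟩
      cases a <;> cases b <;> simp [hr1, hr2, hr3, hr4] <;> norm_num
    · have := le_ciSup (f := fun p : Bool × Bool => r p.1 p.2)
        (Set.Finite.bddAbove (Set.finite_range _)) (true, true)
      simpa [hr4] using this
  refine ⟨?_, ?_, ?_, ?_, ?_, ?_, hr1, hsup⟩
  · intro a; cases a <;> simp [hq2α, hq2β] <;> norm_num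
  · intro a; cases a <;> simp [hq1α, hq1β] <;> norm_num
  · intro a; cases a <;> simp [hq1α, hq1β, hr1, hr3]
  · intro a; cases a <;> simp [hq2α, hq2β, hr1, hr2]
  · left; rw [hq1α, hr2]; norm_num
  · rw [hsup, hr1]; norm_num
end

section
/- Any set of factored functions q^{k,⋆} arising from a team optimal policy satisfies: max_{a^k} q^{k,⋆}(s,a^k) = max_ā [ r(s,ā) + γ E max_{a'^k} q^{k,⋆}(s', a'^k) ] for every state s and agent k. -/
/-- Any set of factored functions q^{k,⋆} arising from a team optimal policy
satisfies max_{a^k} q^{k,⋆}(s,a^k) = max_ā [ r(s,ā) + γ E max_{a'^k} q^{k,⋆}(s', a'^k) ]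
for every state s and agent k. -/
theorem stmt4
    {S : Type} [Fintype S] [Nonempty S]
    {K : ℕ} {A : Fin K → Type} [∀ k, Fintype (A k)] [∀ k, Nonempty (A k)]
    (r : S → ((k : Fin K) → A k) → ℝ)
    (P : S → ((k : Fin K) → A k) → S → ℝ)
    (γ : ℝ) (hγ0 : 0 ≤ γ) (hγ1 : γ < 1)
    (hPnn : ∀ s aj s', 0 ≤ P s aj s') (hPsum : ∀ s aj, ∑ s', P s aj s' = 1)
    (qd : S → ((k : Fin K) → A k) → ℝ)
    (hBellman : ∀ s aj, qd s aj
      = r s aj + γ * ∑ s', (P s aj s' * (⨆ aj' : (k : Fin K) → A k, qd s' aj')))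
    (π : S → (k : Fin K) → A k)
    (hopt : ∀ s, qd s (π s) = ⨆ aj : (k : Fin K) → A k, qd s aj)
    (qstar : (k : Fin K) → S → A k → ℝ)
    (hdef : ∀ k s a, qstar k s a = qd s (Function.update (π s) k a)) :
    ∀ (k : Fin K) (s : S),
      (⨆ a : A k, qstar k s a)
        = ⨆ aj : (k : Fin K) → A k,
            (r s aj + γ * ∑ s', (P s aj s' * (⨆ a' : A k, qstar k s' a'))) := by
  intro k s
  have key : ∀ s, (⨆ a : A k, qstar k s a) = ⨆ aj : (k : Fin K) → A k, qd s aj := by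
    intro s
    apply le_antisymm
    · apply ciSup_le
      intro a
      rw [hdef]
      exact le_ciSup (Set.Finite.bddAbove (Set.finite_range _)) _
    · rw [← hopt s]
      have h : qd s (π s) = qstar k s (π s k) := by
        rw [hdef, Function.update_eq_self]
      rw [h]
      exact le_ciSup (Set.Finite.bddAbove (Set.finite_range _)) _
  rw [key]
  congr 1
  funext aj
  simp only [key]
  exact hBellman s aj
end

section
/- The set C_0^U = { (q^1,...,q^K) : q^k(s,a^k) ≤ max_{a^{-k}} q†(s,a^k,a^{-k}) for all k,s,a^k } is invariant under both operators B_E and B_I; consequently it is invariant under any number of applications of the random operator B_p. -/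
open scoped Classical

section

variable {S : Type} [Fintype S] [Nonempty S]
  {K : ℕ} {A : Fin K → Type} [∀ k, Fintype (A k)] [∀ k, Nonempty (A k)]

/-- The optimistic-exact team Bellman operator B_E: the other agents play the
greedy actions prescribed by the selector `g`. -/
noncomputable def BE (r : S → ((k : Fin K) → A k) → ℝ)
    (P : S → ((k : Fin K) → A k) → S → ℝ) (γ : ℝ)
    (g : ((k : Fin K) → S → A k → ℝ) → S → ((k : Fin K) → A k))
    (Q : (k : Fin K) → S → A k → ℝ) : (k : Fin K) → S → A k → ℝ :=
  fun k s a =>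
    r s (Function.update (g Q s) k a)
      + γ * ∑ s', (P s (Function.update (g Q s) k a) s' * (⨆ a' : A k, Q k s' a'))

/-- The individual-optimism operator B_I. -/
noncomputable def BI (r : S → ((k : Fin K) → A k) → ℝ)
    (P : S → ((k : Fin K) → A k) → S → ℝ) (γ : ℝ)
    (Q : (k : Fin K) → S → A k → ℝ) : (k : Fin K) → S → A k → ℝ :=
  fun k s a =>
    max (Q k s a)
      (⨆ b : (n : Fin K) → A n,
        (r s (Function.update b k a)
          + γ * ∑ s', (P s (Function.update b k a) s' * (⨆ a' : A k, Q k s' a'))))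

/-- Apply a finite sequence of operators (`true` = B_E, `false` = B_I). -/
noncomputable def applySeq (r : S → ((k : Fin K) → A k) → ℝ)
    (P : S → ((k : Fin K) → A k) → S → ℝ) (γ : ℝ)
    (g : ((k : Fin K) → S → A k → ℝ) → S → ((k : Fin K) → A k))
    (ops : List Bool) (Q : (k : Fin K) → S → A k → ℝ) :
    (k : Fin K) → S → A k → ℝ :=
  ops.foldr (fun b acc => if b then BE r P γ g acc else BI r P γ acc) Q

/-- The no-overestimation set C_0^U. -/
def C0U (qd : S → ((k : Fin K) → A k) → ℝ)
    (Q : (k : Fin K) → S → A k → ℝ) : Prop :=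
  ∀ (k : Fin K) (s : S) (a : A k),
    Q k s a ≤ ⨆ b : (n : Fin K) → A n, qd s (Function.update b k a)

/-- The set C_0^U is invariant under both B_E and B_I; consequently it is
invariant under any number of applications of the random operator B_p (i.e., under any
finite sequence of applications of B_E and B_I). -/
theorem stmt7
    (r : S → ((k : Fin K) → A k) → ℝ)
    (P : S → ((k : Fin K) → A k) → S → ℝ)
    (γ : ℝ) (hγ0 : 0 ≤ γ) (hγ1 : γ < 1)
    (hPnn : ∀ s aj s', 0 ≤ P s aj s') (hPsum : ∀ s aj, ∑ s', P s aj s' = 1)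
    (g : ((k : Fin K) → S → A k → ℝ) → S → ((k : Fin K) → A k))
    (hg : ∀ (Q : (k : Fin K) → S → A k → ℝ) (s : S) (n : Fin K) (a : A n),
      Q n s a ≤ Q n s (g Q s n))
    (qd : S → ((k : Fin K) → A k) → ℝ)
    (hBellman : ∀ s aj, qd s aj
      = r s aj + γ * ∑ s', (P s aj s' * (⨆ aj' : (k : Fin K) → A k, qd s' aj'))) :
    ∀ (Q : (k : Fin K) → S → A k → ℝ), C0U qd Q →
      C0U qd (BE r P γ g Q) ∧ C0U qd (BI r P γ Q) ∧
      ∀ ops : List Bool, C0U qd (applySeq r P γ g ops Q) := by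
  have bddq : ∀ {ι : Type} [Finite ι] (f : ι → ℝ), BddAbove (Set.range f) := by
    intro ι _ f; exact Finite.bddAbove_range f
  have key : ∀ (Q : (k : Fin K) → S → A k → ℝ), C0U qd Q →
      ∀ (k : Fin K) (s : S) (a : A k) (b : (n : Fin K) → A n),
      r s (Function.update b k a)
        + γ * ∑ s', (P s (Function.update b k a) s' * (⨆ a' : A k, Q k s' a'))
      ≤ ⨆ b' : (n : Fin K) → A n, qd s (Function.update b' k a) := by
    intro Q hQ k s a b
    have hsup : ∀ s', (⨆ a' : A k, Q k s' a') ≤ ⨆ aj : (n : Fin K) → A n, qd s' aj := by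
      intro s'
      refine ciSup_le fun a' => (hQ k s' a').trans
        (ciSup_le fun c => le_ciSup (bddq _) (Function.update c k a'))
    have hsum : ∑ s', (P s (Function.update b k a) s' * (⨆ a' : A k, Q k s' a'))
        ≤ ∑ s', (P s (Function.update b k a) s' * (⨆ aj : (n : Fin K) → A n, qd s' aj)) :=
      Finset.sum_le_sum fun s' _ =>
        mul_le_mul_of_nonneg_left (hsup s') (hPnn _ _ _)
    have h1 : r s (Function.update b k a)
        + γ * ∑ s', (P s (Function.update b k a) s' * (⨆ a' : A k, Q k s' a'))
        ≤ qd s (Function.update b k a) := by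
      rw [hBellman s (Function.update b k a)]
      exact add_le_add (le_refl _) (mul_le_mul_of_nonneg_left hsum hγ0)
    exact h1.trans (le_ciSup (bddq fun b' => qd s (Function.update b' k a)) b)
  have hE : ∀ (Q : (k : Fin K) → S → A k → ℝ), C0U qd Q → C0U qd (BE r P γ g Q) := by
    intro Q hQ k s a
    exact key Q hQ k s a (g Q s)
  have hI : ∀ (Q : (k : Fin K) → S → A k → ℝ), C0U qd Q → C0U qd (BI r P γ Q) := by
    intro Q hQ k s a
    exact max_le (hQ k s a) (ciSup_le fun b => key Q hQ k s a b)
  intro Q hQ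
  refine ⟨hE Q hQ, hI Q hQ, ?_⟩
  intro ops
  induction ops with
  | nil => exact hQ
  | cons b t ih =>
      show C0U qd (if b then BE r P γ g (applySeq r P γ g t Q) else BI r P γ (applySeq r P γ g t Q))
      by_cases hb : b
      · simp only [hb, if_true]; exact hE _ ih
      · simp only [hb, if_false]; exact hI _ ih

end
end

section
/- For a sequence of N ≥ L independent coin tosses with probability of heads equal to 1−p, the probability that there exists a run of at least L consecutive heads equals 1 − β_{N,L} + (1−p)^L β_{N−L,L}, where β_{N,L} = Σ_{j=0}^{⌊N/(L+1)⌋} (−1)^j C(N−jL, j) ( p(1−p)^L )^j. -/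
open scoped Classical

/-- β_{N,L} = Σ_{j=0}^{⌊N/(L+1)⌋} (−1)^j C(N−jL, j) (p(1−p)^L)^j from Uspensky's formula. -/
noncomputable def uspenskyBeta (p : ℝ) (N L : ℕ) : ℝ :=
  ∑ j ∈ Finset.range (N / (L + 1) + 1),
    (-1 : ℝ) ^ j * ((N - j * L).choose j : ℝ) * (p * (1 - p) ^ L) ^ j

/-- The event that ω contains a run of at least L consecutive heads (`true`). -/
def hasRun (N L : ℕ) (ω : Fin N → Bool) : Prop :=
  ∃ m : ℕ, m + L ≤ N ∧ ∀ j : Fin N, m ≤ (j : ℕ) → (j : ℕ) < m + L → ω j = true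

/-! ### Sum machinery -/

noncomputable def W (p : ℝ) {N : ℕ} (ω : Fin N → Bool) : ℝ :=
  ∏ i, if ω i then 1 - p else p

lemma sum_split (M K : ℕ) (F : (Fin M → Bool) → (Fin K → Bool) → ℝ) :
    (∑ ω : Fin (M + K) → Bool,
        F (fun i => ω (Fin.castAdd K i)) (fun i => ω (Fin.natAdd M i)))
      = ∑ σ : Fin M → Bool, ∑ τ : Fin K → Bool, F σ τ := by
  rw [← Fintype.sum_prod_type']
  apply Fintype.sum_equiv
    ((Equiv.arrowCongr finSumFinEquiv.symm (Equiv.refl Bool)).trans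
      (Equiv.sumArrowEquivProdArrow _ _ _))
  intro ω
  congr 1

lemma W_split (p : ℝ) (M K : ℕ) (ω : Fin (M + K) → Bool) :
    W p ω = W p (fun i => ω (Fin.castAdd K i)) * W p (fun i => ω (Fin.natAdd M i)) := by
  simpa [W] using Fin.prod_univ_add (fun i => if ω i then 1 - p else p)

lemma sum_W (p : ℝ) : ∀ N, (∑ ω : Fin N → Bool, W p ω) = 1 := by
  intro N
  induction N with
  | zero => simp [W]
  | succ n ih =>
    rw [show (∑ ω : Fin (n+1) → Bool, W p ω)
        = ∑ ω : Fin (n+1) → Bool,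
            W p (fun i => ω (Fin.castAdd 1 i)) * W p (fun i => ω (Fin.natAdd n i)) from
      Finset.sum_congr rfl fun ω _ => W_split p n 1 ω]
    rw [sum_split n 1 (fun σ τ => W p σ * W p τ), ← Finset.sum_mul_sum, ih]
    have : (∑ τ : Fin 1 → Bool, W p τ) = 1 := by
      rw [Fintype.sum_equiv (Equiv.funUnique (Fin 1) Bool) _ (fun b => if b then 1-p else p)
        (fun τ => by simp [W, Fin.prod_univ_one, Equiv.funUnique])]
      simp
    rw [this, one_mul]

lemma marg_run (p : ℝ) (M K L : ℕ) :
    (∑ ω : Fin (M + K) → Bool,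
        if hasRun M L (fun i => ω (Fin.castAdd K i)) then 0 else W p ω)
      = ∑ σ : Fin M → Bool, (if hasRun M L σ then 0 else W p σ) := by
  have key : ∀ ω : Fin (M + K) → Bool,
      (if hasRun M L (fun i => ω (Fin.castAdd K i)) then 0 else W p ω)
        = (if hasRun M L (fun i => ω (Fin.castAdd K i)) then 0
            else W p (fun i => ω (Fin.castAdd K i))) * W p (fun i => ω (Fin.natAdd M i)) := by
    intro ω
    by_cases h : hasRun M L (fun i => ω (Fin.castAdd K i)) <;> simp [h, W_split p M K ω]
  rw [Finset.sum_congr rfl fun ω _ => key ω,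
    sum_split M K (fun σ τ => (if hasRun M L σ then 0 else W p σ) * W p τ)]
  refine Finset.sum_congr rfl fun σ _ => ?_
  rw [← Finset.mul_sum, sum_W p K, mul_one]

lemma fixed_run (p : ℝ) (M K L : ℕ) (b : Fin K → Bool) :
    (∑ ω : Fin (M + K) → Bool,
        if (¬ hasRun M L (fun i => ω (Fin.castAdd K i)))
            ∧ (fun i => ω (Fin.natAdd M i)) = b
        then W p ω else 0)
      = (∑ σ : Fin M → Bool, (if hasRun M L σ then 0 else W p σ)) * W p b := by
  have key : ∀ ω : Fin (M + K) → Bool,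
      (if (¬ hasRun M L (fun i => ω (Fin.castAdd K i)))
            ∧ (fun i => ω (Fin.natAdd M i)) = b then W p ω else 0)
        = (if hasRun M L (fun i => ω (Fin.castAdd K i)) then 0
            else W p (fun i => ω (Fin.castAdd K i)))
            * (if (fun i => ω (Fin.natAdd M i)) = b
                then W p (fun i => ω (Fin.natAdd M i)) else 0) := by
    intro ω
    by_cases h1 : hasRun M L (fun i => ω (Fin.castAdd K i)) <;>
      by_cases h2 : (fun i => ω (Fin.natAdd M i)) = b <;>
      simp [h1, h2, W_split p M K ω]
  rw [Finset.sum_congr rfl fun ω _ => key ω,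
    sum_split M K (fun σ τ =>
      (if hasRun M L σ then 0 else W p σ) * (if τ = b then W p τ else 0)),
    ← Finset.sum_mul_sum]
  congr 1
  simp

/-! ### Run predicates -/

def runBelow (N L M : ℕ) (ω : Fin N → Bool) : Prop :=
  ∃ m : ℕ, m + L ≤ M ∧ ∀ j : Fin N, m ≤ (j : ℕ) → (j : ℕ) < m + L → ω j = true

lemma hasRun_comp {N M L : ℕ} (ω : Fin N → Bool) (g : Fin M → Fin N)
    (hg : ∀ i, (g i : ℕ) = (i : ℕ)) :
    hasRun M L (fun i => ω (g i)) ↔ runBelow N L M ω := by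
  constructor
  · rintro ⟨m, hm, hω⟩
    refine ⟨m, hm, fun j hj1 hj2 => ?_⟩
    have hjM : (j : ℕ) < M := lt_of_lt_of_le hj2 hm
    have := hω ⟨j, hjM⟩ (by simpa using hj1) (by simpa using hj2)
    have hgj : g ⟨j, hjM⟩ = j := Fin.ext (by rw [hg])
    simpa [hgj] using this
  · rintro ⟨m, hm, hω⟩
    refine ⟨m, hm, fun j hj1 hj2 => ?_⟩
    exact hω (g j) (by rw [hg]; exact hj1) (by rw [hg]; exact hj2)

def pat (L : ℕ) : Fin (L + 1) → Bool := fun i => if (i : ℕ) = 0 then false else true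

def Epat (M L : ℕ) (ω : Fin (M + L + 1) → Bool) : Prop :=
  ¬ runBelow (M + L + 1) L M ω ∧ (fun i : Fin (L+1) => ω (Fin.natAdd M i)) = pat L

lemma epat_suffix {M L : ℕ} {ω : Fin (M + L + 1) → Bool}
    (h : (fun i : Fin (L+1) => ω (Fin.natAdd M i)) = pat L) :
    ω ⟨M, by omega⟩ = false ∧ ∀ k : ℕ, ∀ _hk : k < L, ω ⟨M + 1 + k, by omega⟩ = true := by
  constructor
  · have := congrFun h ⟨0, by omega⟩
    simpa [pat, Fin.natAdd] using this
  · intro k hk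
    have := congrFun h ⟨k + 1, by omega⟩
    simp only [pat, Fin.natAdd] at this
    simpa [show M + (k+1) = M + 1 + k by omega] using this

lemma key2 {M L : ℕ} (hL : 1 ≤ L) (ω : Fin (M + L + 1) → Bool) :
    runBelow (M + L + 1) L (M + L) ω ∨ Epat M L ω → hasRun (M + L + 1) L ω := by
  rintro (⟨m, hm, hω⟩ | ⟨-, hpat⟩)
  · exact ⟨m, by omega, hω⟩
  · obtain ⟨-, h2⟩ := epat_suffix hpat
    refine ⟨M + 1, by omega, fun j hj1 hj2 => ?_⟩
    have := h2 ((j : ℕ) - (M + 1)) (by omega)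
    have hje : (⟨M + 1 + ((j:ℕ) - (M+1)), by omega⟩ : Fin (M + L + 1)) = j :=
      Fin.ext (by simp; omega)
    rwa [hje] at this

lemma key1 {M L : ℕ} (hL : 1 ≤ L) (ω : Fin (M + L + 1) → Bool) :
    hasRun (M + L + 1) L ω → runBelow (M + L + 1) L (M + L) ω ∨ Epat M L ω := by
  rintro ⟨m, hm, hω⟩
  by_cases hA : runBelow (M + L + 1) L (M + L) ω
  · exact Or.inl hA
  have hmM : m = M + 1 := by
    by_contra hne
    exact hA ⟨m, by omega, hω⟩
  subst hmM
  have hMf : ω ⟨M, by omega⟩ = false := by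
    by_contra hMt
    simp only [Bool.not_eq_false] at hMt
    apply hA
    refine ⟨M, by omega, fun j hj1 hj2 => ?_⟩
    rcases Nat.eq_or_lt_of_le hj1 with heq | hlt
    · have hje : (⟨M, by omega⟩ : Fin (M + L + 1)) = j := Fin.ext (by simpa using heq)
      rw [← hje]; exact hMt
    · exact hω j (by omega) (by omega)
  refine Or.inr ⟨fun hrb => ?_, ?_⟩
  · obtain ⟨m', hm', h'⟩ := hrb
    exact hA ⟨m', by omega, h'⟩
  · funext i
    show ω (Fin.natAdd M i) = pat L i
    rcases Nat.eq_zero_or_pos (i : ℕ) with h0 | hpos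
    · have hje : Fin.natAdd M i = (⟨M, by omega⟩ : Fin (M + L + 1)) := Fin.ext (by simp [h0])
      rw [hje, hMf]; simp [pat, h0]
    · have hp : pat L i = true := by simp only [pat, if_neg (Nat.pos_iff_ne_zero.mp hpos)]
      rw [hp]
      exact hω (Fin.natAdd M i) (by simp; omega) (by simp; omega)

lemma key3 {M L : ℕ} (hL : 1 ≤ L) (ω : Fin (M + L + 1) → Bool) :
    Epat M L ω → ¬ runBelow (M + L + 1) L (M + L) ω := by
  rintro ⟨hnr, hpat⟩ ⟨m, hm, hω⟩
  obtain ⟨hMf, -⟩ := epat_suffix hpat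
  by_cases hcase : m + L ≤ M
  · exact hnr ⟨m, hcase, hω⟩
  · have h1 : m ≤ M := by omega
    have h2 : M < m + L := by omega
    have := hω ⟨M, by omega⟩ (by simpa using h1) (by simpa using h2)
    rw [hMf] at this; exact Bool.false_ne_true this

/-! ### The no-run probability r -/

noncomputable def r (p : ℝ) (L N : ℕ) : ℝ :=
  ∑ ω : Fin N → Bool, if hasRun N L ω then 0 else W p ω

lemma r_of_lt (p : ℝ) {L N : ℕ} (h : N < L) : r p L N = 1 := by
  have hno : ∀ ω : Fin N → Bool, ¬ hasRun N L ω := by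
    rintro ω ⟨m, hm, -⟩; omega
  rw [r, Finset.sum_congr rfl fun ω _ => if_neg (hno ω)]
  exact sum_W p N

lemma W_pat (p : ℝ) (L : ℕ) : W p (pat L) = p * (1 - p) ^ L := by
  have h0 : pat L 0 = false := by simp [pat]
  have hs : ∀ i : Fin L, pat L i.succ = true := fun i => by simp [pat]
  rw [W, Fin.prod_univ_succ, h0]
  simp [hs, Finset.prod_const]

lemma r_L (p : ℝ) {L : ℕ} (hL : 1 ≤ L) : r p L L = 1 - (1 - p) ^ L := by
  have hiff : ∀ ω : Fin L → Bool, hasRun L L ω ↔ ω = fun _ => true := by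
    intro ω
    constructor
    · rintro ⟨m, hm, h⟩
      funext j
      exact h j (by omega) (by omega)
    · rintro rfl
      exact ⟨0, by omega, fun j _ _ => rfl⟩
  have point : ∀ ω : Fin L → Bool,
      (if hasRun L L ω then 0 else W p ω)
        = W p ω - (if ω = (fun _ => true) then W p ω else 0) := by
    intro ω
    by_cases h : hasRun L L ω
    · rw [if_pos h, if_pos ((hiff ω).mp h)]; ring
    · have h2 : ¬ ω = (fun _ => true) := fun hh => h ((hiff ω).mpr hh)
      rw [if_neg h, if_neg h2]; ring
  rw [r, Finset.sum_congr rfl fun ω _ => point ω, Finset.sum_sub_distrib, sum_W p L]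
  congr 1
  rw [Finset.sum_ite_eq' Finset.univ (fun _ => true) (W p)]
  simp [W, Finset.prod_const]

lemma r_rec (p : ℝ) {L : ℕ} (hL : 1 ≤ L) (M : ℕ) :
    r p L (M + L + 1) = r p L (M + L) - (p * (1 - p) ^ L) * r p L M := by
  have point : ∀ ω : Fin (M + L + 1) → Bool,
      (if hasRun (M + L + 1) L ω then 0 else W p ω)
        = (if runBelow (M + L + 1) L (M + L) ω then 0 else W p ω)
          - (if Epat M L ω then W p ω else 0) := by
    intro ω
    by_cases hE : Epat M L ω
    · have hB := key2 hL ω (Or.inr hE)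
      have hA := key3 hL ω hE
      simp [hE, hB, hA]
    · by_cases hA : runBelow (M + L + 1) L (M + L) ω
      · have hB := key2 hL ω (Or.inl hA)
        simp [hE, hB, hA]
      · have hB : ¬ hasRun (M + L + 1) L ω := fun h => ((key1 hL ω h).elim hA hE)
        simp [hE, hB, hA]
  rw [r, Finset.sum_congr rfl fun ω _ => point ω, Finset.sum_sub_distrib]
  congr 1
  · -- marginalize the last coordinate
    have hAB : ∀ ω : Fin (M + L + 1) → Bool,
        runBelow (M + L + 1) L (M + L) ω
          ↔ hasRun (M + L) L (fun i => ω (Fin.castAdd 1 i)) :=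
      fun ω => (hasRun_comp ω (Fin.castAdd 1) (fun i => by simp)).symm
    calc (∑ ω : Fin (M + L + 1) → Bool,
            if runBelow (M + L + 1) L (M + L) ω then 0 else W p ω)
        = ∑ ω : Fin ((M + L) + 1) → Bool,
            (if hasRun (M + L) L (fun i => ω (Fin.castAdd 1 i)) then 0 else W p ω) := by
          refine Finset.sum_congr rfl fun ω _ => ?_
          by_cases h : runBelow (M + L + 1) L (M + L) ω
          · simp [h, (hAB ω).mp h]
          · have h2 : ¬ hasRun (M + L) L (fun i => ω (Fin.castAdd 1 i)) :=
              fun hh => h ((hAB ω).mpr hh)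
            simp [h, h2]
      _ = ∑ σ : Fin (M + L) → Bool, (if hasRun (M + L) L σ then 0 else W p σ) :=
          marg_run p (M + L) 1 L
      _ = r p L (M + L) := by rw [r]
  · -- fixed suffix
    have hME : ∀ ω : Fin (M + L + 1) → Bool,
        Epat M L ω ↔ (¬ hasRun M L (fun i : Fin M => ω (Fin.castAdd (L + 1) i))
          ∧ (fun i : Fin (L + 1) => ω (Fin.natAdd M i)) = pat L) := by
      intro ω
      unfold Epat
      have := hasRun_comp (L := L) ω (Fin.castAdd (L + 1)) (fun i => by simp)
      constructor
      · rintro ⟨h1, h2⟩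
        exact ⟨fun hh => h1 (this.mp hh), h2⟩
      · rintro ⟨h1, h2⟩
        exact ⟨fun hh => h1 (this.mpr hh), h2⟩
    calc (∑ ω : Fin (M + L + 1) → Bool, if Epat M L ω then W p ω else 0)
        = ∑ ω : Fin (M + (L + 1)) → Bool,
            (if (¬ hasRun M L (fun i => ω (Fin.castAdd (L + 1) i)))
                ∧ (fun i => ω (Fin.natAdd M i)) = pat L then W p ω else 0) := by
          refine Finset.sum_congr rfl fun ω _ => ?_
          by_cases h : Epat M L ω
          · simp [h, (hME ω).mp h]
          · have h2 : ¬ ((¬ hasRun M L (fun i : Fin M => ω (Fin.castAdd (L + 1) i)))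
                ∧ (fun i : Fin (L + 1) => ω (Fin.natAdd M i)) = pat L) :=
              fun hh => h ((hME ω).mpr hh)
            simp only [if_neg h, if_neg h2]
      _ = (∑ σ : Fin M → Bool, (if hasRun M L σ then 0 else W p σ)) * W p (pat L) :=
          fixed_run p M (L + 1) L (pat L)
      _ = (p * (1 - p) ^ L) * r p L M := by
          rw [W_pat, mul_comm, r]

/-! ### Beta lemmas -/

lemma beta_le (p : ℝ) {N L : ℕ} (h : N ≤ L) : uspenskyBeta p N L = 1 := by
  have : N / (L + 1) = 0 := Nat.div_eq_of_lt (by omega)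
  simp [uspenskyBeta, this]

lemma term_id (x : ℝ) {N L j : ℕ} (hb : (j + 1) * L + (j + 1) ≤ N) :
    (-1 : ℝ) ^ (j+1) * (((N - (j+1) * L).choose (j+1) : ℕ) : ℝ) * x ^ (j+1)
      = (-1 : ℝ) ^ (j+1) * ((((N - 1) - (j+1) * L).choose (j+1) : ℕ) : ℝ) * x ^ (j+1)
        - x * ((-1 : ℝ) ^ j * ((((N - 1 - L) - j * L).choose j : ℕ) : ℝ) * x ^ j) := by
  have hm : j * L + L = (j + 1) * L := by ring
  have h1 : N - (j+1) * L = ((N - 1) - (j+1) * L) + 1 := by omega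
  have h2 : (N - 1 - L) - j * L = (N - 1) - (j+1) * L := by omega
  rw [h1, h2, Nat.choose_succ_succ]
  push_cast
  ring

lemma natDivSubOne {k n : ℕ} (hk : 0 < k) (h : k ≤ n) : (n - k) / k = n / k - 1 := by
  have h3 := Nat.div_eq_sub_div hk h
  rw [h3, Nat.add_sub_cancel]

lemma beta_rec (p : ℝ) {N L : ℕ} (hL : 1 ≤ L) (h : L + 1 ≤ N) :
    uspenskyBeta p N L
      = uspenskyBeta p (N - 1) L - (p * (1 - p) ^ L) * uspenskyBeta p (N - 1 - L) L := by
  have hm1 : 1 ≤ N / (L + 1) := (Nat.one_le_div_iff (by omega)).mpr (by omega)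
  have hmN : N / (L + 1) * (L + 1) ≤ N := Nat.div_mul_le_self N (L + 1)
  have hm2 : (N - 1 - L) / (L + 1) = N / (L + 1) - 1 := by
    rw [show N - 1 - L = N - (L+1) by omega, natDivSubOne (by omega) h]
  rw [uspenskyBeta, Finset.sum_range_succ'
    (fun j => (-1 : ℝ) ^ j * ((N - j * L).choose j : ℝ) * (p * (1 - p) ^ L) ^ j) (N / (L+1))]
  have step : ∀ j ∈ Finset.range (N / (L + 1)),
      (-1 : ℝ) ^ (j+1) * ((N - (j+1) * L).choose (j+1) : ℝ) * (p * (1 - p) ^ L) ^ (j+1)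
        = (-1 : ℝ) ^ (j+1) * (((N - 1) - (j+1) * L).choose (j+1) : ℝ)
              * (p * (1 - p) ^ L) ^ (j+1)
          - (p * (1 - p) ^ L)
              * ((-1 : ℝ) ^ j * (((N - 1 - L) - j * L).choose j : ℝ)
                  * (p * (1 - p) ^ L) ^ j) := by
    intro j hj
    have hjm : j < N / (L + 1) := Finset.mem_range.mp hj
    have hb : (j + 1) * L + (j + 1) ≤ N := by
      have h1 : (j + 1) * (L + 1) ≤ N / (L + 1) * (L + 1) := Nat.mul_le_mul_right _ (by omega)
      have h2 : (j + 1) * L + (j + 1) = (j + 1) * (L + 1) := by ring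
      omega
    exact term_id _ hb
  rw [Finset.sum_congr rfl step, Finset.sum_sub_distrib, ← Finset.mul_sum]
  have hS2 : (∑ j ∈ Finset.range (N / (L + 1)),
      (-1 : ℝ) ^ j * (((N - 1 - L) - j * L).choose j : ℝ) * (p * (1 - p) ^ L) ^ j)
        = uspenskyBeta p (N - 1 - L) L := by
    rw [uspenskyBeta, show (N - 1 - L) / (L + 1) + 1 = N / (L + 1) by omega]
  have hS1 : (∑ j ∈ Finset.range (N / (L + 1)),
        (-1 : ℝ) ^ (j+1) * (((N - 1) - (j+1) * L).choose (j+1) : ℝ)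
            * (p * (1 - p) ^ L) ^ (j+1))
      + (-1 : ℝ) ^ 0 * ((N - 0 * L).choose 0 : ℝ) * (p * (1 - p) ^ L) ^ 0
        = uspenskyBeta p (N - 1) L := by
    have hg0 : ((-1 : ℝ) ^ 0 * ((N - 0 * L).choose 0 : ℝ) * (p * (1 - p) ^ L) ^ 0)
        = (-1 : ℝ) ^ 0 * (((N - 1) - 0 * L).choose 0 : ℝ) * (p * (1 - p) ^ L) ^ 0 := by simp
    rw [hg0, ← Finset.sum_range_succ'
      (fun j => (-1 : ℝ) ^ j * (((N - 1) - j * L).choose j : ℝ) * (p * (1 - p) ^ L) ^ j)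
      (N / (L + 1))]
    have hle : (N - 1) / (L + 1) ≤ N / (L + 1) := Nat.div_le_div_right (by omega)
    rcases eq_or_lt_of_le hle with heq | hlt
    · rw [uspenskyBeta, heq]
    · have hNm : N = N / (L + 1) * (L + 1) := by
        have h3 := (Nat.div_lt_iff_lt_mul (show 0 < L + 1 by omega)).mp hlt
        omega
      have hml : N / (L + 1) * L + N / (L + 1) = N / (L + 1) * (L + 1) := by ring
      have htopz : (((N - 1) - N / (L + 1) * L).choose (N / (L + 1)) : ℝ) = 0 := by
        rw [show (N - 1) - N / (L + 1) * L = N / (L + 1) - 1 by omega,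
          Nat.choose_eq_zero_of_lt (by omega)]
        simp
      have hm1eq : (N - 1) / (L + 1) = N / (L + 1) - 1 := by
        have hge : N / (L + 1) - 1 ≤ (N - 1) / (L + 1) := by
          rw [← hm2]; exact Nat.div_le_div_right (by omega)
        omega
      rw [Finset.sum_range_succ
        (fun j => (-1 : ℝ) ^ j * (((N - 1) - j * L).choose j : ℝ) * (p * (1 - p) ^ L) ^ j)
        (N / (L + 1))]
      rw [htopz, uspenskyBeta, hm1eq, show N / (L + 1) - 1 + 1 = N / (L + 1) by omega]
      ring
  rw [← hS1, ← hS2]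
  ring

/-! ### Main identity -/

lemma r_eq_beta (p : ℝ) {L : ℕ} (hL : 1 ≤ L) :
    ∀ N, L ≤ N → r p L N = uspenskyBeta p N L - (1 - p) ^ L * uspenskyBeta p (N - L) L := by
  intro N
  induction N using Nat.strong_induction_on with
  | _ N ih =>
  intro hLN
  rcases eq_or_lt_of_le hLN with hEq | hlt
  · subst hEq
    rw [r_L p hL, beta_le p le_rfl, Nat.sub_self, beta_le p (by omega)]
    ring
  · obtain ⟨M, rfl⟩ : ∃ M, N = M + L + 1 := ⟨N - L - 1, by omega⟩
    have hrec := r_rec p hL M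
    have hb := beta_rec p hL (show L + 1 ≤ M + L + 1 by omega)
    have e1 : M + L + 1 - 1 = M + L := by omega
    have e2 : M + L + 1 - 1 - L = M := by omega
    have e3 : M + L + 1 - L = M + 1 := by omega
    rw [e2, e1] at hb
    have ih1 : r p L (M + L)
        = uspenskyBeta p (M + L) L - (1 - p) ^ L * uspenskyBeta p (M + L - L) L :=
      ih (M + L) (by omega) (by omega)
    have e4 : M + L - L = M := by omega
    rw [e4] at ih1
    rw [hrec, e3, hb, ih1]
    by_cases hcase : L ≤ M
    · have ih2 : r p L M
          = uspenskyBeta p M L - (1 - p) ^ L * uspenskyBeta p (M - L) L :=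
        ih M (by omega) hcase
      have hb2 := beta_rec p hL (show L + 1 ≤ M + 1 by omega)
      have e5 : M + 1 - 1 = M := by omega
      have e6 : M + 1 - 1 - L = M - L := by omega
      rw [e5] at hb2
      rw [ih2, hb2]
      ring
    · have hβ1 : uspenskyBeta p (M + 1) L = 1 := beta_le p (by omega)
      have hβ2 : uspenskyBeta p M L = 1 := beta_le p (by omega)
      have hrM : r p L M = 1 := r_of_lt p (by omega)
      rw [hβ1, hβ2, hrM]
      ring

/-- For N ≥ L independent coin tosses, each heads with probability 1−p,
the probability of a run of at least L consecutive heads equals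
1 − β_{N,L} + (1−p)^L β_{N−L,L} (Uspensky's formula). -/
theorem stmt13
    (p : ℝ) (hp0 : 0 < p) (hp1 : p < 1) (N L : ℕ) (hL : 1 ≤ L) (hLN : L ≤ N) :
    (∑ ω : Fin N → Bool,
        (if hasRun N L ω then ∏ i : Fin N, (if ω i then 1 - p else p) else 0))
      = 1 - uspenskyBeta p N L + (1 - p) ^ L * uspenskyBeta p (N - L) L := by

  have point : ∀ ω : Fin N → Bool,
      (if hasRun N L ω then ∏ i : Fin N, (if ω i then 1 - p else p) else 0)
        = W p ω - (if hasRun N L ω then 0 else W p ω) := by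
    intro ω
    by_cases h : hasRun N L ω <;> simp [h, W]
  rw [Finset.sum_congr rfl fun ω _ => point ω, Finset.sum_sub_distrib, sum_W p N]
  rw [show (∑ ω : Fin N → Bool, if hasRun N L ω then 0 else W p ω) = r p L N from rfl]
  rw [r_eq_beta p hL N hLN]
  ring
end

section
/- Fix δ₁ > 0 and let n₀ = ⌊ log_γ ( δ₁ / ( q_U − min_s max_ā q†(s,ā) ) ) ⌋. For any initial functions q^k, after N applications of the random operator B_p, P( B_p^N q^k(s,a^k) ≤ max_{a^{-k}} q†(s,a^k,a^{-k}) + δ₁ for all k,s,a^k ) ≥ 1 − Σ_{n=0}^{n₀} C(N,n) p^n (1−p)^{N−n}. -/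
open scoped Classical
set_option linter.unusedSectionVars false
set_option maxHeartbeats 1000000

private lemma binom_bound (N n₀ : ℕ) (p : ℝ) (hp0 : 0 ≤ p) (hp1 : p ≤ 1)
    (good : (Fin N → Bool) → Prop)
    (hgood : ∀ c, ¬ good c → (Finset.univ.filter fun i => c i = true).card ≤ n₀) :
    1 - ∑ n ∈ Finset.range (n₀ + 1), (N.choose n : ℝ) * p ^ n * (1 - p) ^ (N - n)
      ≤ ∑ c : Fin N → Bool,
          (if good c then ∏ i : Fin N, (if c i then p else 1 - p) else 0) := by
  classical
  set W : (Fin N → Bool) → ℝ := fun c => ∏ i, (if c i then p else 1 - p) with hW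
  have hWnn : ∀ c, 0 ≤ W c := fun c => Finset.prod_nonneg fun i _ => by
    split <;> linarith
  have hWsum : ∑ c, W c = 1 := by
    rw [hW]
    rw [← Fintype.prod_sum (fun (_ : Fin N) (b : Bool) => if b then p else 1 - p)]
    simp
  set t : (Fin N → Bool) → ℕ := fun c => (Finset.univ.filter fun i => c i = true).card
    with ht
  have htN : ∀ c, t c ≤ N := fun c => by
    simpa using (Finset.card_filter_le Finset.univ fun i => c i = true)
  have hWval : ∀ c, W c = p ^ t c * (1 - p) ^ (N - t c) := by
    intro c
    have h2 := Finset.card_filter_add_card_filter_not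
      (s := (Finset.univ : Finset (Fin N))) (p := fun i => c i = true)
    rw [hW]
    dsimp only
    rw [Finset.prod_ite (fun _ => p) (fun _ => 1 - p), Finset.prod_const,
      Finset.prod_const,
      show (Finset.filter (fun x => ¬c x = true) Finset.univ).card = N - t c from by
        simp only [Finset.card_univ, Fintype.card_fin] at h2;
        have h3 : t c = (Finset.filter (fun i => c i = true) Finset.univ).card := rfl;
        omega]
  have hsplit : ∀ c, (if good c then W c else 0) = W c - (if good c then 0 else W c) := by
    intro c; split <;> ring
  have hrw : ∑ c : Fin N → Bool, (if good c then W c else 0)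
      = 1 - ∑ c : Fin N → Bool, (if good c then 0 else W c) := by
    rw [Finset.sum_congr rfl fun c _ => hsplit c, Finset.sum_sub_distrib, hWsum]
  rw [hrw]
  refine sub_le_sub_left ?_ 1
  have step1 : ∑ c : Fin N → Bool, (if good c then 0 else W c)
      ≤ ∑ c : Fin N → Bool, (if t c ≤ n₀ then W c else 0) := by
    refine Finset.sum_le_sum fun c _ => ?_
    by_cases hg : good c
    · simp only [hg, if_true]
      split <;> [exact hWnn c; exact le_refl 0]
    · have := hgood c hg
      simp only [hg, if_false, this, if_true]
      rw [if_pos this]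
  refine step1.trans ?_
  rw [← Finset.sum_filter]
  rw [← Finset.sum_fiberwise_of_maps_to (g := t) (t := Finset.range (n₀ + 1))
    (fun c hc => by simp only [Finset.mem_filter] at hc; simp; omega) W]
  refine Finset.sum_le_sum fun n hn => ?_
  have hconst : ∀ c ∈ ((Finset.univ.filter fun c => t c ≤ n₀).filter fun c => t c = n),
      W c = p ^ n * (1 - p) ^ (N - n) := by
    intro c hc
    simp only [Finset.mem_filter] at hc
    rw [hWval c, hc.2]
  rw [Finset.sum_congr rfl hconst, Finset.sum_const, nsmul_eq_mul]
  have hcard : (((Finset.univ.filter fun c => t c ≤ n₀).filter fun c => t c = n)).card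
      ≤ N.choose n := by
    have hsub : (((Finset.univ.filter fun c => t c ≤ n₀).filter fun c => t c = n))
        ⊆ Finset.univ.filter fun c => t c = n := by
      intro c hc; simp only [Finset.mem_filter] at hc ⊢; exact ⟨hc.1.1, hc.2⟩
    refine (Finset.card_le_card hsub).trans ?_
    have hinj := Finset.card_le_card_of_injOn
      (s := Finset.univ.filter fun c => t c = n)
      (f := fun c : Fin N → Bool => Finset.univ.filter fun i => c i = true)
      (t := Finset.univ.powersetCard n)
      (fun c hc => Finset.mem_powersetCard.mpr
        ⟨Finset.subset_univ _, (Finset.mem_filter.mp hc).2⟩)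
      (fun c hc c' hc' h => by
        funext i
        have := Finset.ext_iff.mp h i
        simp only [Finset.mem_filter, Finset.mem_univ, true_and] at this
        cases hci : c i <;> cases hci' : c' i <;> simp_all)
    rwa [Finset.card_powersetCard, Finset.card_univ, Fintype.card_fin] at hinj
  calc (((Finset.univ.filter fun c => t c ≤ n₀).filter fun c => t c = n)).card
        * (p ^ n * (1 - p) ^ (N - n))
      ≤ (N.choose n : ℝ) * (p ^ n * (1 - p) ^ (N - n)) := by
        refine mul_le_mul_of_nonneg_right ?_
          (mul_nonneg (pow_nonneg hp0 _) (pow_nonneg (by linarith) _))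
        exact_mod_cast hcard
    _ = (N.choose n : ℝ) * p ^ n * (1 - p) ^ (N - n) := by ring


section

variable {S : Type} [Fintype S] [Nonempty S]
  {K : ℕ} {A : Fin K → Type} [∀ k, Fintype (A k)] [∀ k, Nonempty (A k)]

private lemma count_ofFn_eq : ∀ {N : ℕ} (c : Fin N → Bool),
    (List.ofFn c).count true = (Finset.univ.filter fun i => c i = true).card := by
  intro N
  induction N with
  | zero => intro c; simp
  | succ n ih =>
    intro c
    rw [List.ofFn_succ, List.count_cons, ih (fun i => c i.succ), Finset.card_filter,
      Finset.card_filter, Fin.sum_univ_succ]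
    cases h : c 0 <;> simp [h, add_comm]

private lemma key_step
    (r : S → ((k : Fin K) → A k) → ℝ)
    (P : S → ((k : Fin K) → A k) → S → ℝ)
    (γ : ℝ) (hγ0 : 0 ≤ γ)
    (hPnn : ∀ s aj s', 0 ≤ P s aj s') (hPsum : ∀ s aj, ∑ s', P s aj s' = 1)
    (qd : S → ((k : Fin K) → A k) → ℝ)
    (hBellman : ∀ s aj, qd s aj
      = r s aj + γ * ∑ s', (P s aj s' * (⨆ aj' : (k : Fin K) → A k, qd s' aj')))
    (q : (k : Fin K) → S → A k → ℝ) (d : ℝ)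
    (hq : ∀ k s a, q k s a ≤ (⨆ aj' : (k : Fin K) → A k, qd s aj') + d)
    (k : Fin K) (s : S) (aj : (k : Fin K) → A k) :
    r s aj + γ * ∑ s', (P s aj s' * (⨆ a' : A k, q k s' a'))
      ≤ qd s aj + γ * d := by
  have h1 : ∀ s', (⨆ a' : A k, q k s' a') ≤ (⨆ aj' : (k : Fin K) → A k, qd s' aj') + d :=
    fun s' => ciSup_le fun a' => hq k s' a'
  have h2 : ∑ s', P s aj s' * (⨆ a' : A k, q k s' a')
      ≤ ∑ s', P s aj s' * ((⨆ aj' : (k : Fin K) → A k, qd s' aj') + d) :=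
    Finset.sum_le_sum fun s' _ => mul_le_mul_of_nonneg_left (h1 s') (hPnn s aj s')
  have h3 : ∑ s', P s aj s' * ((⨆ aj' : (k : Fin K) → A k, qd s' aj') + d)
      = (∑ s', P s aj s' * (⨆ aj' : (k : Fin K) → A k, qd s' aj')) + d := by
    simp [mul_add, Finset.sum_add_distrib, ← Finset.sum_mul, hPsum s aj]
  have h4 : γ * ∑ s', P s aj s' * (⨆ a' : A k, q k s' a')
      ≤ γ * ((∑ s', P s aj s' * (⨆ aj' : (k : Fin K) → A k, qd s' aj')) + d) :=
    mul_le_mul_of_nonneg_left (h3 ▸ h2) hγ0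
  have hB := hBellman s aj
  have h5 : γ * ((∑ s', P s aj s' * (⨆ aj' : (k : Fin K) → A k, qd s' aj')) + d)
      = γ * (∑ s', P s aj s' * (⨆ aj' : (k : Fin K) → A k, qd s' aj')) + γ * d := by ring
  linarith

private lemma seq_bound
    (r : S → ((k : Fin K) → A k) → ℝ)
    (P : S → ((k : Fin K) → A k) → S → ℝ)
    (γ : ℝ) (hγ0 : 0 < γ) (hγ1 : γ < 1)
    (hPnn : ∀ s aj s', 0 ≤ P s aj s') (hPsum : ∀ s aj, ∑ s', P s aj s' = 1)
    (g : ((k : Fin K) → S → A k → ℝ) → S → ((k : Fin K) → A k))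
    (qd : S → ((k : Fin K) → A k) → ℝ)
    (hBellman : ∀ s aj, qd s aj
      = r s aj + γ * ∑ s', (P s aj s' * (⨆ aj' : (k : Fin K) → A k, qd s' aj')))
    (Q : (k : Fin K) → S → A k → ℝ) (d₀ : ℝ) (hd₀ : 0 ≤ d₀)
    (hbase : ∀ (k : Fin K) (s : S) (a : A k), Q k s a
      ≤ (⨅ s' : S, ⨆ aj : (k : Fin K) → A k, qd s' aj) + d₀) :
    ∀ l : List Bool,
      (∀ (k : Fin K) (s : S) (a : A k), applySeq r P γ g l Q k s a
          ≤ (⨆ aj : (k : Fin K) → A k, qd s aj) + γ ^ (l.count true) * d₀)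
      ∧ (1 ≤ l.count true → ∀ (k : Fin K) (s : S) (a : A k), applySeq r P γ g l Q k s a
          ≤ (⨆ b : (n : Fin K) → A n, qd s (Function.update b k a))
              + γ ^ (l.count true) * d₀) := by
  intro l
  induction l with
  | nil =>
    constructor
    · intro k s a
      have h1 : (⨅ s' : S, ⨆ aj : (k : Fin K) → A k, qd s' aj)
          ≤ ⨆ aj : (k : Fin K) → A k, qd s aj :=
        ciInf_le ((Set.finite_range _).bddBelow) s
      have := hbase k s a
      simpa [applySeq] using by linarith
    · intro h; simp at h
  | cons b l ih =>
    have hA := ih.1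
    set n := l.count true with hn
    have key := fun (k : Fin K) (s : S) (aj : (k : Fin K) → A k) =>
      key_step r P γ hγ0.le hPnn hPsum qd hBellman (applySeq r P γ g l Q)
        (γ ^ n * d₀) (fun k s a => hA k s a) k s aj
    have hd : 0 ≤ γ ^ n * d₀ := mul_nonneg (pow_nonneg hγ0.le _) hd₀
    have hpow : γ * (γ ^ n * d₀) = γ ^ (n + 1) * d₀ := by ring
    have hmono : γ ^ (n + 1) * d₀ ≤ γ ^ n * d₀ :=
      mul_le_mul_of_nonneg_right
        (pow_le_pow_of_le_one hγ0.le hγ1.le (Nat.le_succ n)) hd₀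
    cases b with
    | true =>
      have happ : applySeq r P γ g (true :: l) Q
          = BE r P γ g (applySeq r P γ g l Q) := rfl
      have hcnt : (true :: l).count true = n + 1 := by simp [hn]
      constructor
      · intro k s a
        rw [happ, hcnt]
        have hk := key k s (Function.update (g (applySeq r P γ g l Q) s) k a)
        have hle : qd s (Function.update (g (applySeq r P γ g l Q) s) k a)
            ≤ ⨆ aj : (k : Fin K) → A k, qd s aj :=
          le_ciSup ((Set.finite_range _).bddAbove) _
        show r s _ + γ * ∑ s', _ ≤ _
        linarith [hpow ▸ hk]
      · intro _ k s a
        rw [happ, hcnt]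
        have hk := key k s (Function.update (g (applySeq r P γ g l Q) s) k a)
        have hle : qd s (Function.update (g (applySeq r P γ g l Q) s) k a)
            ≤ ⨆ b : (n : Fin K) → A n, qd s (Function.update b k a) :=
          le_ciSup (f := fun b : (n : Fin K) → A n => qd s (Function.update b k a))
            ((Set.finite_range _).bddAbove) (g (applySeq r P γ g l Q) s)
        show r s _ + γ * ∑ s', _ ≤ _
        linarith [hpow ▸ hk]
    | false =>
      have happ : applySeq r P γ g (false :: l) Q
          = BI r P γ (applySeq r P γ g l Q) := rfl
      have hcnt : (false :: l).count true = n := by simp [hn]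
      have hsup1 : ∀ (k : Fin K) (s : S) (a : A k),
          (⨆ b : (n : Fin K) → A n,
            (r s (Function.update b k a)
              + γ * ∑ s', (P s (Function.update b k a) s'
                  * (⨆ a' : A k, applySeq r P γ g l Q k s' a'))))
          ≤ (⨆ b : (n : Fin K) → A n, qd s (Function.update b k a)) + γ ^ n * d₀ := by
        intro k s a
        refine ciSup_le fun b => ?_
        have hk := key k s (Function.update b k a)
        have hle : qd s (Function.update b k a)
            ≤ ⨆ b : (n : Fin K) → A n, qd s (Function.update b k a) :=
          le_ciSup (f := fun b : (n : Fin K) → A n => qd s (Function.update b k a))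
            ((Set.finite_range _).bddAbove) b
        linarith [hpow ▸ hk, hmono]
      constructor
      · intro k s a
        rw [happ, hcnt]
        refine max_le (hA k s a) ((hsup1 k s a).trans ?_)
        have : (⨆ b : (n : Fin K) → A n, qd s (Function.update b k a))
            ≤ ⨆ aj : (k : Fin K) → A k, qd s aj := by
          refine ciSup_le fun b => le_ciSup ((Set.finite_range _).bddAbove) _
        linarith
      · intro h k s a
        rw [happ, hcnt]
        exact max_le (ih.2 (hcnt ▸ h) k s a) (hsup1 k s a)

/-- Lemma 1: Fix δ₁ > 0 and let
n₀ = ⌊ log_γ ( δ₁ / ( q_U − min_s max_ā q†(s,ā) ) ) ⌋. For any initial functions q^k,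
after N independent applications of the random operator B_p (B_E with probability p,
B_I with probability 1−p),
P( B_p^N q^k(s,a^k) ≤ max_{a^{-k}} q†(s,a^k,a^{-k}) + δ₁ ∀ k,s,a^k )
  ≥ 1 − Σ_{n=0}^{n₀} C(N,n) p^n (1−p)^{N−n}. -/
theorem stmt14
    (r : S → ((k : Fin K) → A k) → ℝ)
    (P : S → ((k : Fin K) → A k) → S → ℝ)
    (γ : ℝ) (hγ0 : 0 < γ) (hγ1 : γ < 1)
    (hPnn : ∀ s aj s', 0 ≤ P s aj s') (hPsum : ∀ s aj, ∑ s', P s aj s' = 1)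
    (rmax : ℝ) (hrmax : ∀ s aj, r s aj ≤ rmax)
    (g : ((k : Fin K) → S → A k → ℝ) → S → ((k : Fin K) → A k))
    (hg : ∀ (Q : (k : Fin K) → S → A k → ℝ) (s : S) (n : Fin K) (a : A n),
      Q n s a ≤ Q n s (g Q s n))
    (qd : S → ((k : Fin K) → A k) → ℝ)
    (hBellman : ∀ s aj, qd s aj
      = r s aj + γ * ∑ s', (P s aj s' * (⨆ aj' : (k : Fin K) → A k, qd s' aj')))
    (Q : (k : Fin K) → S → A k → ℝ)
    (qU : ℝ)
    (hqU : qU = max (rmax / (1 - γ))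
      (⨆ k : Fin K, ⨆ s : S, ⨆ a : A k, Q k s a))
    (hqUgt : (⨅ s : S, ⨆ aj : (k : Fin K) → A k, qd s aj) < qU)
    (δ₁ : ℝ) (hδ₁ : 0 < δ₁)
    (p : ℝ) (hp0 : 0 < p) (hp1 : p ≤ 1)
    (n₀ : ℕ)
    (hn₀ : n₀ = ⌊Real.log (δ₁ / (qU - ⨅ s : S, ⨆ aj : (k : Fin K) → A k, qd s aj))
      / Real.log γ⌋₊)
    (N : ℕ) :
    1 - ∑ n ∈ Finset.range (n₀ + 1), (N.choose n : ℝ) * p ^ n * (1 - p) ^ (N - n)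
      ≤ ∑ c : Fin N → Bool,
          (if ∀ (k : Fin K) (s : S) (a : A k),
              applySeq r P γ g (List.ofFn c) Q k s a
                ≤ (⨆ b : (n : Fin K) → A n, qd s (Function.update b k a)) + δ₁
            then ∏ i : Fin N, (if c i then p else 1 - p) else 0) := by
  classical
  set m : ℝ := ⨅ s : S, ⨆ aj : (k : Fin K) → A k, qd s aj with hm
  have hd₀ : 0 < qU - m := by linarith [hqUgt]
  have hbase : ∀ (k : Fin K) (s : S) (a : A k), Q k s a ≤ m + (qU - m) := by
    intro k s a
    have h1 : Q k s a ≤ ⨆ a' : A k, Q k s a' :=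
      le_ciSup ((Set.finite_range _).bddAbove) a
    have h2 : (⨆ a' : A k, Q k s a') ≤ ⨆ s' : S, ⨆ a' : A k, Q k s' a' :=
      le_ciSup (f := fun s' => ⨆ a' : A k, Q k s' a')
        ((Set.finite_range _).bddAbove) s
    have h3 : (⨆ s' : S, ⨆ a' : A k, Q k s' a')
        ≤ ⨆ k' : Fin K, ⨆ s' : S, ⨆ a' : A k', Q k' s' a' :=
      le_ciSup (f := fun k' => ⨆ s' : S, ⨆ a' : A k', Q k' s' a')
        ((Set.finite_range _).bddAbove) k
    have h4 : Q k s a ≤ qU := by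
      rw [hqU]; exact le_trans (le_trans h1 (le_trans h2 h3)) (le_max_right _ _)
    linarith
  have hseq := seq_bound r P γ hγ0 hγ1 hPnn hPsum g qd hBellman Q (qU - m) hd₀.le hbase
  have hkey : γ ^ (n₀ + 1) * (qU - m) ≤ δ₁ := by
    have hx : 0 < δ₁ / (qU - m) := div_pos hδ₁ hd₀
    have h1 : γ ^ (n₀ + 1) ≤ δ₁ / (qU - m) := by
      by_cases hx1 : 1 ≤ δ₁ / (qU - m)
      · exact le_trans (pow_le_one₀ hγ0.le hγ1.le) hx1
      · push_neg at hx1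
        have hlogγ : Real.log γ < 0 := Real.log_neg hγ0 hγ1
        have ht : Real.log (δ₁ / (qU - m)) / Real.log γ < (n₀ : ℝ) + 1 := by
          rw [hn₀]; push_cast; exact Nat.lt_floor_add_one _
        have h2 : ((n₀ : ℝ) + 1) * Real.log γ < Real.log (δ₁ / (qU - m)) :=
          (div_lt_iff_of_neg hlogγ).mp ht
        have h3 : Real.log (γ ^ (n₀ + 1)) < Real.log (δ₁ / (qU - m)) := by
          rw [Real.log_pow]; push_cast; linarith
        exact ((Real.log_lt_log_iff (pow_pos hγ0 _) hx).mp h3).le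
    calc γ ^ (n₀ + 1) * (qU - m) ≤ (δ₁ / (qU - m)) * (qU - m) :=
          mul_le_mul_of_nonneg_right h1 hd₀.le
      _ = δ₁ := div_mul_cancel₀ _ (ne_of_gt hd₀)
  have hgood : ∀ c : Fin N → Bool,
      ¬ (∀ (k : Fin K) (s : S) (a : A k),
          applySeq r P γ g (List.ofFn c) Q k s a
            ≤ (⨆ b : (n : Fin K) → A n, qd s (Function.update b k a)) + δ₁) →
      (Finset.univ.filter fun i => c i = true).card ≤ n₀ := by
    intro c hc
    by_contra hgt
    push_neg at hgt
    apply hc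
    intro k s a
    have hcnt : n₀ + 1 ≤ (List.ofFn c).count true := by
      rw [count_ofFn_eq]; omega
    have h2 := (hseq (List.ofFn c)).2 (by omega) k s a
    have h3 : γ ^ ((List.ofFn c).count true) * (qU - m) ≤ γ ^ (n₀ + 1) * (qU - m) :=
      mul_le_mul_of_nonneg_right (pow_le_pow_of_le_one hγ0.le hγ1.le hcnt) hd₀.le
    linarith
  have hb := binom_bound N n₀ p hp0.le hp1 _ hgood
  convert hb using 3

end
end

section
/- For any q^k bounded above by q_U ≥ r_max/(1−γ), the sequence B_I^n q^k is pointwise nondecreasing, uniformly bounded above by q_U, and converges pointwise; its limit q̄^k satisfies q̄^k(s,a^k) ≥ max_{a^{-k}} q†(s,a^k,a^{-k}) for all s,a^k. -/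
open scoped Classical

section

variable {S : Type} [Fintype S] [Nonempty S]
  {K : ℕ} {A : Fin K → Type} [∀ k, Fintype (A k)] [∀ k, Nonempty (A k)]

/-- For any q^k bounded above by q_U ≥ r_max/(1−γ), the sequence B_I^n q^k
is pointwise nondecreasing, uniformly bounded above by q_U, and converges pointwise; its
limit q̄^k satisfies q̄^k(s,a^k) ≥ max_{a^{-k}} q†(s,a^k,a^{-k}) for all s, a^k. -/
theorem stmt17
    (r : S → ((k : Fin K) → A k) → ℝ)
    (P : S → ((k : Fin K) → A k) → S → ℝ)
    (γ : ℝ) (hγ0 : 0 ≤ γ) (hγ1 : γ < 1)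
    (hPnn : ∀ s aj s', 0 ≤ P s aj s') (hPsum : ∀ s aj, ∑ s', P s aj s' = 1)
    (rmax : ℝ) (hrmax : ∀ s aj, r s aj ≤ rmax)
    (qd : S → ((k : Fin K) → A k) → ℝ)
    (hBellman : ∀ s aj, qd s aj
      = r s aj + γ * ∑ s', (P s aj s' * (⨆ aj' : (k : Fin K) → A k, qd s' aj')))
    (qU : ℝ) (hqU : rmax ≤ qU * (1 - γ))
    (Q : (k : Fin K) → S → A k → ℝ)
    (hQle : ∀ (k : Fin K) (s : S) (a : A k), Q k s a ≤ qU) :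
    -- pointwise nondecreasing
    (∀ (k : Fin K) (s : S) (a : A k),
      Monotone fun n : ℕ => (BI r P γ)^[n] Q k s a) ∧
    -- uniformly bounded above by q_U
    (∀ (n : ℕ) (k : Fin K) (s : S) (a : A k), (BI r P γ)^[n] Q k s a ≤ qU) ∧
    -- pointwise convergence to a limit q̄ with q̄ ≥ max_{a^{-k}} q†(s,a^k,a^{-k})
    (∃ Qbar : (k : Fin K) → S → A k → ℝ,
      (∀ (k : Fin K) (s : S) (a : A k),
        Filter.Tendsto (fun n : ℕ => (BI r P γ)^[n] Q k s a)
          Filter.atTop (nhds (Qbar k s a))) ∧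
      ∀ (k : Fin K) (s : S) (a : A k),
        (⨆ b : (n : Fin K) → A n, qd s (Function.update b k a)) ≤ Qbar k s a) := by
  classical
  set D : (k : Fin K) → S → A k → ℝ :=
    fun k s a => ⨆ b : (n : Fin K) → A n, qd s (Function.update b k a) with hD
  -- monotone step: BI f ≥ f
  have hge : ∀ (f : (k : Fin K) → S → A k → ℝ) (k : Fin K) (s : S) (a : A k),
      f k s a ≤ BI r P γ f k s a := by
    intro f k s a; exact le_max_left _ _
  have hmono : ∀ (k : Fin K) (s : S) (a : A k),
      Monotone fun n : ℕ => (BI r P γ)^[n] Q k s a := by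
    intro k s a
    refine monotone_nat_of_le_succ fun n => ?_
    rw [Function.iterate_succ_apply']
    exact hge _ k s a
  -- bound step
  have hstep : ∀ (f : (k : Fin K) → S → A k → ℝ),
      (∀ k s a, f k s a ≤ qU) → ∀ k s a, BI r P γ f k s a ≤ qU := by
    intro f hf k s a
    simp only [BI]
    refine max_le (hf k s a) (ciSup_le fun b => ?_)
    have h1 : ∀ s', (⨆ a' : A k, f k s' a') ≤ qU := fun s' => ciSup_le (hf k s')
    have h2 : ∑ s', P s (Function.update b k a) s' * (⨆ a' : A k, f k s' a') ≤ qU := by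
      calc ∑ s', P s (Function.update b k a) s' * (⨆ a' : A k, f k s' a')
          ≤ ∑ s', P s (Function.update b k a) s' * qU :=
            Finset.sum_le_sum fun s' _ => mul_le_mul_of_nonneg_left (h1 s') (hPnn _ _ _)
        _ = qU := by rw [← Finset.sum_mul, hPsum, one_mul]
    have h3 := hrmax s (Function.update b k a)
    nlinarith [mul_le_mul_of_nonneg_left h2 hγ0]
  have hbound : ∀ (n : ℕ) (k : Fin K) (s : S) (a : A k),
      (BI r P γ)^[n] Q k s a ≤ qU := by
    intro n
    induction n with
    | zero => exact hQle
    | succ n ih =>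
      intro k s a
      rw [Function.iterate_succ_apply']
      exact hstep _ ih k s a
  -- key contraction-style step for the lower bound
  have key : ∀ ε : ℝ, 0 ≤ ε → ∀ Q' : (k : Fin K) → S → A k → ℝ,
      (∀ k s a, D k s a - ε ≤ Q' k s a) →
      ∀ k s a, D k s a - γ * ε ≤ BI r P γ Q' k s a := by
    intro ε hε Q' hQ' k s a
    have hV : ∀ s', (⨆ aj : (n : Fin K) → A n, qd s' aj)
        ≤ (⨆ a' : A k, Q' k s' a') + ε := by
      intro s'
      refine ciSup_le fun aj => ?_
      have h1 : qd s' aj ≤ D k s' (aj k) := by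
        have := le_ciSup
          (Set.finite_range fun b : (n : Fin K) → A n =>
            qd s' (Function.update b k (aj k))).bddAbove aj
        simpa [Function.update_eq_self] using this
      have h2 : D k s' (aj k) ≤ Q' k s' (aj k) + ε := by
        have := hQ' k s' (aj k); linarith
      have h3 : Q' k s' (aj k) ≤ ⨆ a' : A k, Q' k s' a' :=
        le_ciSup (Set.finite_range fun a' : A k => Q' k s' a').bddAbove (aj k)
      linarith
    have hb : ∀ b : (n : Fin K) → A n,
        qd s (Function.update b k a) - γ * ε
        ≤ r s (Function.update b k a)
          + γ * ∑ s', P s (Function.update b k a) s' * (⨆ a' : A k, Q' k s' a') := by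
      intro b
      have hsum : ∑ s', P s (Function.update b k a) s'
            * (⨆ aj : (n : Fin K) → A n, qd s' aj)
          ≤ (∑ s', P s (Function.update b k a) s' * (⨆ a' : A k, Q' k s' a')) + ε := by
        calc ∑ s', P s (Function.update b k a) s' * (⨆ aj : (n : Fin K) → A n, qd s' aj)
            ≤ ∑ s', P s (Function.update b k a) s' * ((⨆ a' : A k, Q' k s' a') + ε) :=
              Finset.sum_le_sum fun s' _ =>
                mul_le_mul_of_nonneg_left (hV s') (hPnn _ _ _)
          _ = (∑ s', P s (Function.update b k a) s' * (⨆ a' : A k, Q' k s' a'))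
                + (∑ s', P s (Function.update b k a) s') * ε := by
              simp [mul_add, Finset.sum_add_distrib, Finset.sum_mul]
          _ = _ := by rw [hPsum]; ring
      have hB := hBellman s (Function.update b k a)
      nlinarith [mul_le_mul_of_nonneg_left hsum hγ0]
    have hs : D k s a ≤ (⨆ b : (n : Fin K) → A n,
        (r s (Function.update b k a)
          + γ * ∑ s', P s (Function.update b k a) s' * (⨆ a' : A k, Q' k s' a'))) + γ * ε := by
      refine ciSup_le fun b => ?_
      have h1 := hb b
      have h2 : (r s (Function.update b k a)
          + γ * ∑ s', P s (Function.update b k a) s' * (⨆ a' : A k, Q' k s' a'))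
          ≤ ⨆ b : (n : Fin K) → A n,
            (r s (Function.update b k a)
              + γ * ∑ s', P s (Function.update b k a) s' * (⨆ a' : A k, Q' k s' a')) :=
        le_ciSup (Set.finite_range fun b : (n : Fin K) → A n =>
          (r s (Function.update b k a)
            + γ * ∑ s', P s (Function.update b k a) s' * (⨆ a' : A k, Q' k s' a'))).bddAbove b
      linarith
    have h4 : (⨆ b : (n : Fin K) → A n,
        (r s (Function.update b k a)
          + γ * ∑ s', P s (Function.update b k a) s' * (⨆ a' : A k, Q' k s' a')))
        ≤ BI r P γ Q' k s a := le_max_right _ _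
    linarith
  -- initial slack
  obtain ⟨ε, hε0, hεD⟩ : ∃ ε : ℝ, 0 ≤ ε ∧
      ∀ (k : Fin K) (s : S) (a : A k), D k s a - ε ≤ Q k s a := by
    refine ⟨max 0 (⨆ p : Σ k : Fin K, S × A k,
      (D p.1 p.2.1 p.2.2 - Q p.1 p.2.1 p.2.2)), le_max_left _ _, ?_⟩
    intro k s a
    have h1 := le_ciSup (Set.finite_range fun p : Σ k : Fin K, S × A k =>
      (D p.1 p.2.1 p.2.2 - Q p.1 p.2.1 p.2.2)).bddAbove (⟨k, s, a⟩ : Σ k : Fin K, S × A k)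
    have h2 := le_max_right 0 (⨆ p : Σ k : Fin K, S × A k,
      (D p.1 p.2.1 p.2.2 - Q p.1 p.2.1 p.2.2))
    simp only at h1
    linarith
  have hlow : ∀ (n : ℕ) (k : Fin K) (s : S) (a : A k),
      D k s a - γ ^ n * ε ≤ (BI r P γ)^[n] Q k s a := by
    intro n
    induction n with
    | zero => simpa using hεD
    | succ n ih =>
      intro k s a
      rw [Function.iterate_succ_apply']
      have := key (γ ^ n * ε) (mul_nonneg (pow_nonneg hγ0 n) hε0) _ ih k s a
      calc D k s a - γ ^ (n + 1) * ε = D k s a - γ * (γ ^ n * ε) := by ring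
        _ ≤ _ := this
  refine ⟨hmono, hbound, fun k s a => ⨆ n : ℕ, (BI r P γ)^[n] Q k s a, ?_, ?_⟩
  · intro k s a
    exact tendsto_atTop_ciSup (hmono k s a) ⟨qU, by rintro x ⟨n, rfl⟩; exact hbound n k s a⟩
  · intro k s a
    have hbdd : BddAbove (Set.range fun n : ℕ => (BI r P γ)^[n] Q k s a) :=
      ⟨qU, by rintro x ⟨n, rfl⟩; exact hbound n k s a⟩
    have hlim : Filter.Tendsto (fun n : ℕ => D k s a - γ ^ n * ε)
        Filter.atTop (nhds (D k s a)) := by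
      have h := tendsto_pow_atTop_nhds_zero_of_lt_one hγ0 hγ1
      simpa using tendsto_const_nhds.sub (h.mul_const ε)
    refine le_of_tendsto hlim (Filter.Eventually.of_forall fun n => ?_)
    exact (hlow n k s a).trans (le_ciSup hbdd n)


end
end
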